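/- For every real h̄ > 1, the inversion integral of a constant double-discontinuity evaluates in closed form: ∫₀¹ x^{h̄−2} · ₂F₁(h̄,h̄;2h̄;x) dx = Γ(2h̄) / (Γ(h̄)² · h̄(h̄−1)). -/

import Mathlib

open Real

open Filter MeasureTheory Topology

/-- Pochhammer symbol `(a)_n = a (a+1) ⋯ (a+n-1)`. -/
noncomputable def poch (a : ℝ) (n : ℕ) : ℝ := (ascPochhammer ℝ n).eval a

/-- Gauss hypergeometric series `₂F₁(a,b;c;x)`. -/
noncomputable def F21 (a b c x : ℝ) : ℝ :=
  ∑' n : ℕ, poch a n * poch b n / (poch c n * (n.factorial : ℝ)) * x ^ n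

lemma poch_zero (a : ℝ) : poch a 0 = 1 := by simp [poch]

lemma poch_succ (a : ℝ) (n : ℕ) : poch a (n+1) = poch a n * (a + n) := by
  simp [poch, ascPochhammer_succ_eval]

lemma poch_pos {a : ℝ} (ha : 0 < a) (n : ℕ) : 0 < poch a n :=
  ascPochhammer_pos n a ha

lemma poch_succ_left (a : ℝ) (n : ℕ) : poch a (n+1) = a * poch (a+1) n := by
  induction n with
  | zero => simp [poch_succ, poch_zero]
  | succ n ih =>
      rw [poch_succ, ih, poch_succ]
      push_cast; ring

lemma poch_eq_prod (a : ℝ) (n : ℕ) : poch a n = ∏ j ∈ Finset.range n, (a + j) := by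
  induction n with
  | zero => simp [poch_zero]
  | succ n ih => rw [poch_succ, ih, Finset.prod_range_succ]

noncomputable def tTerm (h : ℝ) (n : ℕ) : ℝ :=
  poch (h-1) n * poch h n / (poch (2*h) n * n.factorial)

noncomputable def pSum (h : ℝ) (n : ℕ) : ℝ :=
  poch h n * poch (h+1) n / (poch (2*h) n * n.factorial)

lemma poch_add_one_eq (h : ℝ) (hh : h ≠ 0) (n : ℕ) :
    poch (h+1) n = poch h n * (h + n) / h := by
  have h1 : poch h (n+1) = h * poch (h+1) n := poch_succ_left h n
  have h2 : poch h (n+1) = poch h n * (h + n) := poch_succ h n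
  field_simp
  linear_combination h2 - h1

lemma tele (h : ℝ) (hh : 1 < h) (n : ℕ) :
    ∑ k ∈ Finset.range (n+1), tTerm h k = pSum h n := by
  have h0 : (0:ℝ) < h := by linarith
  induction n with
  | zero => simp [tTerm, pSum, poch_zero]
  | succ n ih =>
      rw [Finset.sum_range_succ, ih]
      have hD : (0:ℝ) < poch (2*h) n := poch_pos (by linarith) n
      have hF : ((n.factorial : ℝ)) ≠ 0 := Nat.cast_ne_zero.mpr n.factorial_ne_zero
      have h2n : (2*h + n) ≠ 0 := by positivity
      have hsub : poch (h-1) (n+1) = (h-1) * poch h n := by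
        have := poch_succ_left (h-1) n
        rwa [show h - 1 + 1 = h by ring] at this
      unfold tTerm pSum
      rw [hsub, poch_succ (h+1) n, poch_succ h n, poch_succ (2*h) n,
        poch_add_one_eq h h0.ne' n, Nat.factorial_succ]
      push_cast
      field_simp
      ring

lemma pSum_tendsto (h : ℝ) (hh : 1 < h) :
    Tendsto (pSum h) atTop (𝓝 (Gamma (2*h) / (Gamma h * Gamma (h+1)))) := by
  have h0 : (0:ℝ) < h := by linarith
  have hG : ∀ (s : ℝ) (n : ℕ),
      Real.GammaSeq s n = (n:ℝ)^s * n.factorial / poch s (n+1) := by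
    intro s n
    rw [Real.GammaSeq, poch_eq_prod]
  have key : ∀ n : ℕ, 1 ≤ n → pSum h (n+1) =
      ((n:ℝ)/((n:ℝ)+1)) *
        (Real.GammaSeq (2*h) n / (Real.GammaSeq h n * Real.GammaSeq (h+1) n)) := by
    intro n hn
    have hn0 : (0:ℝ) < n := by exact_mod_cast hn
    have hr : (n:ℝ)^h * (n:ℝ)^(h+1) = (n:ℝ)^(2*h) * n := by
      rw [← Real.rpow_add hn0, show h + (h+1) = 2*h + 1 by ring,
        Real.rpow_add hn0, Real.rpow_one]
    have hr' : (n:ℝ)^(h+1) = (n:ℝ)^(2*h) * n / (n:ℝ)^h := by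
      rw [eq_div_iff (Real.rpow_pos_of_pos hn0 h).ne']
      linear_combination hr
    have ph := poch_pos (show (0:ℝ) < h by linarith) (n+1)
    have ph1 := poch_pos (show (0:ℝ) < h+1 by linarith) (n+1)
    have p2 := poch_pos (show (0:ℝ) < 2*h by linarith) (n+1)
    have hF : ((n.factorial : ℝ)) ≠ 0 := Nat.cast_ne_zero.mpr n.factorial_ne_zero
    have hF1 : (((n+1).factorial : ℝ)) ≠ 0 := Nat.cast_ne_zero.mpr (n+1).factorial_ne_zero
    have hrp : ((n:ℝ))^h ≠ 0 := (Real.rpow_pos_of_pos hn0 h).ne'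
    have hrp2 : ((n:ℝ))^(2*h) ≠ 0 := (Real.rpow_pos_of_pos hn0 (2*h)).ne'
    unfold pSum
    rw [hG, hG, hG, hr', Nat.factorial_succ]
    push_cast
    field_simp
  have hne : Real.Gamma h * Real.Gamma (h+1) ≠ 0 :=
    (mul_pos (Real.Gamma_pos_of_pos h0) (Real.Gamma_pos_of_pos (by linarith))).ne'
  have h2 : Tendsto (fun n : ℕ => ((n:ℝ)/((n:ℝ)+1)) *
      (Real.GammaSeq (2*h) n / (Real.GammaSeq h n * Real.GammaSeq (h+1) n))) atTop
      (𝓝 (1 * (Gamma (2*h) / (Gamma h * Gamma (h+1))))) :=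
    (tendsto_natCast_div_add_atTop (1:ℝ)).mul
      ((Real.GammaSeq_tendsto_Gamma (2*h)).div
        ((Real.GammaSeq_tendsto_Gamma h).mul (Real.GammaSeq_tendsto_Gamma (h+1))) hne)
  rw [one_mul] at h2
  have h3 : Tendsto (fun n : ℕ => pSum h (n+1)) atTop
      (𝓝 (Gamma (2*h) / (Gamma h * Gamma (h+1)))) := by
    refine h2.congr' ?_
    filter_upwards [eventually_ge_atTop 1] with n hn
    exact (key n hn).symm
  exact (tendsto_add_atTop_iff_nat 1).mp h3

lemma tTerm_nonneg (h : ℝ) (hh : 1 < h) (n : ℕ) : 0 ≤ tTerm h n := by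
  have := poch_pos (show (0:ℝ) < h - 1 by linarith) n
  have := poch_pos (show (0:ℝ) < h by linarith) n
  have := poch_pos (show (0:ℝ) < 2*h by linarith) n
  have : (0:ℝ) < n.factorial := by exact_mod_cast n.factorial_pos
  unfold tTerm
  positivity

lemma tTerm_hasSum (h : ℝ) (hh : 1 < h) :
    HasSum (tTerm h) (Gamma (2*h) / (Gamma h * Gamma (h+1))) := by
  rw [hasSum_iff_tendsto_nat_of_nonneg (tTerm_nonneg h hh)]
  apply (tendsto_add_atTop_iff_nat 1).mp
  exact Tendsto.congr (fun n => (tele h hh n).symm) (pSum_tendsto h hh)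

/-- for h̄ > 1, the inversion integral of a constant
double-discontinuity evaluates in closed form:
`∫₀¹ x^{h̄−2} ₂F₁(h̄,h̄;2h̄;x) dx = Γ(2h̄)/(Γ(h̄)²·h̄(h̄−1))`. -/
theorem inversion_integral_const (hb : ℝ) (hhb : 1 < hb) :
    (∫ x in (0 : ℝ)..1, x ^ (hb - 2) * F21 hb hb (2 * hb) x)
      = Real.Gamma (2 * hb) / ((Real.Gamma hb) ^ 2 * (hb * (hb - 1))) := by
  have h0 : (0:ℝ) < hb := by linarith
  have h1 : (0:ℝ) < hb - 1 := by linarith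
  set c : ℕ → ℝ := fun n => poch hb n * poch hb n / (poch (2*hb) n * n.factorial) with hc
  have hcnn : ∀ n, 0 ≤ c n := by
    intro n
    have := poch_pos h0 n
    have := poch_pos (show (0:ℝ) < 2*hb by linarith) n
    have : (0:ℝ) < n.factorial := by exact_mod_cast n.factorial_pos
    positivity
  have hct : ∀ n : ℕ, c n / (hb - 1 + n) = tTerm hb n / (hb - 1) := by
    intro n
    have hrel : poch (hb-1) n * (hb - 1 + n) = (hb-1) * poch hb n := by
      rw [← poch_succ (hb-1) n]
      have := poch_succ_left (hb-1) n
      rwa [show hb - 1 + 1 = hb by ring] at this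
    have hD : (0:ℝ) < poch (2*hb) n := poch_pos (by linarith) n
    have hF : ((n.factorial : ℝ)) ≠ 0 := Nat.cast_ne_zero.mpr n.factorial_ne_zero
    have hdn : (hb - 1 + (n:ℝ)) ≠ 0 := by positivity
    simp only [hc, tTerm]
    field_simp
    linear_combination (-(poch hb n)) * hrel
  set F : ℕ → ℝ → ℝ := fun n x => c n * x ^ (hb - 2 + n) with hF
  have hexp : ∀ n : ℕ, (-1:ℝ) < hb - 2 + n := by
    intro n
    have : (0:ℝ) ≤ n := n.cast_nonneg
    linarith
  have hInt : ∀ n : ℕ, IntegrableOn (F n) (Set.Ioc (0:ℝ) 1) := by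
    intro n
    have h := intervalIntegral.intervalIntegrable_rpow' (a := 0) (b := 1) (hexp n)
    exact ((intervalIntegrable_iff_integrableOn_Ioc_of_le zero_le_one).mp h).const_mul (c n)
  have hval : ∀ n : ℕ, ∫ x in Set.Ioc (0:ℝ) 1, F n x = c n / (hb - 1 + n) := by
    intro n
    simp only [hF]
    rw [MeasureTheory.integral_const_mul, ← intervalIntegral.integral_of_le zero_le_one,
      integral_rpow (Or.inl (hexp n)), Real.one_rpow,
      Real.zero_rpow (by have : (0:ℝ) ≤ n := n.cast_nonneg; intro hcon; linarith), sub_zero,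
      show hb - 2 + (n:ℝ) + 1 = hb - 1 + n from by ring]
    rw [mul_one_div]
  have hnorm : ∀ n : ℕ, ∫ x in Set.Ioc (0:ℝ) 1, ‖F n x‖ = c n / (hb - 1 + n) := by
    intro n
    rw [← hval n]
    apply setIntegral_congr_fun measurableSet_Ioc
    intro x hx
    have : 0 ≤ F n x := mul_nonneg (hcnn n) (Real.rpow_nonneg hx.1.le _)
    exact Real.norm_of_nonneg this
  have hsum : Summable (fun n : ℕ => ∫ x in Set.Ioc (0:ℝ) 1, ‖F n x‖) := by
    apply Summable.congr (((tTerm_hasSum hb hhb).summable).div_const (hb-1))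
    intro n
    rw [hnorm n, hct n]
  have hswap : ∫ x in Set.Ioc (0:ℝ) 1, ∑' n, F n x = ∑' n, ∫ x in Set.Ioc (0:ℝ) 1, F n x :=
    (MeasureTheory.integral_tsum_of_summable_integral_norm hInt hsum).symm
  have hIoc : (∫ x in (0:ℝ)..1, x ^ (hb - 2) * F21 hb hb (2*hb) x)
      = ∫ x in Set.Ioc (0:ℝ) 1, x ^ (hb - 2) * F21 hb hb (2*hb) x :=
    intervalIntegral.integral_of_le zero_le_one
  have hptwise : ∀ x ∈ Set.Ioc (0:ℝ) 1,
      x ^ (hb - 2) * F21 hb hb (2*hb) x = ∑' n, F n x := by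
    intro x hx
    have hx0 : 0 < x := hx.1
    rw [F21, ← tsum_mul_left]
    apply tsum_congr
    intro n
    simp only [hF, hc]
    rw [Real.rpow_add hx0, Real.rpow_natCast]
    ring
  rw [hIoc, setIntegral_congr_fun measurableSet_Ioc hptwise, hswap]
  have : ∀ n : ℕ, ∫ x in Set.Ioc (0:ℝ) 1, F n x = tTerm hb n / (hb - 1) := by
    intro n; rw [hval n, hct n]
  rw [tsum_congr this, tsum_div_const, (tTerm_hasSum hb hhb).tsum_eq,
    Real.Gamma_add_one h0.ne']
  rw [div_div]
  congr 1
  ring
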